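/- arXiv:1706.05269 — 3 statements merged into one kernel-verified Lean document; each statement's English description precedes it below -/
import Mathlib

section
/- For an n × n matrix A with nonnegative real entries a_{ij}, the largest eigenvalue (spectral radius) r(A) satisfies r(A) ≥ (1/n) Σ_{i<j} 2·√(a_{ij} a_{ji}) + (1/n) Σ_i a_{ii}, i.e., r(A) ≥ (1/n) Σ_{i,j} √(a_{ij} a_{ji}) where the sum ranges over all ordered pairs (i,j). -/
open Finset Filter Topology Matrix

namespace SpectralAux

variable {n : ℕ}

variable {n : ℕ}

def simplex (n : ℕ) : Set (Fin n → ℝ) := {x | (∀ i, 0 ≤ x i) ∧ ∑ i, x i = 1}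

lemma isClosed_simplex : IsClosed (simplex n) := by
  have h : simplex n = (⋂ i, {x : Fin n → ℝ | 0 ≤ x i}) ∩ {x | ∑ i, x i = 1} := by
    ext x; simp [simplex, Set.mem_iInter]
  rw [h]
  exact (isClosed_iInter fun i => isClosed_le continuous_const (continuous_apply i)).inter
    (isClosed_eq (continuous_finset_sum _ fun i _ => continuous_apply i) continuous_const)

lemma le_one_of_mem_simplex {x : Fin n → ℝ} (hx : x ∈ simplex n) (i : Fin n) : x i ≤ 1 := by
  have := Finset.single_le_sum (f := x) (fun j _ => hx.1 j) (Finset.mem_univ i)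
  simpa [hx.2] using this

lemma isCompact_simplex : IsCompact (simplex n) := by
  have h1 : IsCompact (Set.pi Set.univ fun _ : Fin n => Set.Icc (0:ℝ) 1) :=
    isCompact_univ_pi fun _ => isCompact_Icc
  refine h1.of_isClosed_subset isClosed_simplex ?_
  intro x hx
  simp only [Set.mem_pi, Set.mem_univ, Set.mem_Icc, forall_true_left]
  exact fun i => ⟨hx.1 i, le_one_of_mem_simplex hx i⟩

lemma continuous_mulVec (A : Matrix (Fin n) (Fin n) ℝ) (i : Fin n) :
    Continuous fun x : Fin n → ℝ => A.mulVec x i := by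
  simp only [Matrix.mulVec, dotProduct]
  exact continuous_finset_sum _ fun j _ => (continuous_const.mul (continuous_apply j))

lemma exists_pos_of_mem_simplex (hn : 0 < n) {x : Fin n → ℝ} (hx : x ∈ simplex n) :
    ∃ j, 0 < x j := by
  by_contra h
  push_neg at h
  have : ∀ j, x j = 0 := fun j => le_antisymm (h j) (hx.1 j)
  have h2 : (1:ℝ) = 0 := by
    rw [← hx.2]; exact Finset.sum_eq_zero fun j _ => this j
  norm_num at h2

lemma mulVec_apply' (A : Matrix (Fin n) (Fin n) ℝ) (x : Fin n → ℝ) (i : Fin n) :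
    A.mulVec x i = ∑ j, A i j * x j := rfl

lemma perron_positive (hn : 0 < n) (A : Matrix (Fin n) (Fin n) ℝ) (hA : ∀ i j, 0 < A i j) :
    ∃ (r : ℝ) (x : Fin n → ℝ), x ∈ simplex n ∧ 0 ≤ r ∧ (∀ i, 0 < x i) ∧
      A.mulVec x = r • x := by
  haveI : Nonempty (Fin n) := ⟨⟨0, hn⟩⟩
  set S : Set ℝ := {t | ∃ x ∈ simplex n, ∀ i, t * x i ≤ A.mulVec x i} with hS
  have hx₀ : (fun _ : Fin n => (n:ℝ)⁻¹) ∈ simplex n := by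
    constructor
    · intro i; positivity
    · simp [Finset.sum_const, Finset.card_univ]
      field_simp
  have h0S : (0:ℝ) ∈ S := by
    refine ⟨_, hx₀, fun i => ?_⟩
    rw [zero_mul, mulVec_apply']
    exact Finset.sum_nonneg fun j _ => mul_nonneg (hA i j).le (by positivity)
  have hbdd : BddAbove S := by
    refine ⟨∑ i, ∑ j, A i j, fun t ht => ?_⟩
    obtain ⟨x, hx, hineq⟩ := ht
    calc t = ∑ i, t * x i := by rw [← Finset.mul_sum, hx.2, mul_one]
      _ ≤ ∑ i, A.mulVec x i := Finset.sum_le_sum fun i _ => hineq i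
      _ ≤ ∑ i, ∑ j, A i j := by
          refine Finset.sum_le_sum fun i _ => ?_
          rw [mulVec_apply']
          exact Finset.sum_le_sum fun j _ =>
            mul_le_of_le_one_right (hA i j).le (le_one_of_mem_simplex hx j)
  set r := sSup S with hr
  have hr0 : 0 ≤ r := le_csSup hbdd h0S
  obtain ⟨u, -, hu, huS⟩ := exists_seq_tendsto_sSup ⟨0, h0S⟩ hbdd
  choose xs hxsmem hxineq using huS
  obtain ⟨x, hxmem, φ, hφ, hxt⟩ := isCompact_simplex.tendsto_subseq hxsmem
  have key : ∀ i, r * x i ≤ A.mulVec x i := by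
    intro i
    have h1 : Tendsto (fun k => u (φ k) * xs (φ k) i) atTop (𝓝 (r * x i)) :=
      (hu.comp hφ.tendsto_atTop).mul (((continuous_apply i).tendsto x).comp hxt)
    have h2 : Tendsto (fun k => A.mulVec (xs (φ k)) i) atTop (𝓝 (A.mulVec x i)) :=
      ((continuous_mulVec A i).tendsto x).comp hxt
    exact le_of_tendsto_of_tendsto' h1 h2 fun k => hxineq (φ k) i
  obtain ⟨j₀, hj₀⟩ := exists_pos_of_mem_simplex hn hxmem
  have hy : ∀ i, 0 < A.mulVec x i := by
    intro i
    rw [mulVec_apply']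
    have : A i j₀ * x j₀ ≤ ∑ j, A i j * x j :=
      Finset.single_le_sum (fun j _ => mul_nonneg (hA i j).le (hxmem.1 j)) (Finset.mem_univ j₀)
    exact lt_of_lt_of_le (mul_pos (hA i j₀) hj₀) this
  have heig : A.mulVec x = r • x := by
    by_contra hne
    have : ∃ i₀, r * x i₀ < A.mulVec x i₀ := by
      by_contra h
      push_neg at h
      exact hne (funext fun i => by
        have := le_antisymm (key i) (h i)
        simp [Pi.smul_apply, smul_eq_mul, ← this])
    obtain ⟨i₀, hi₀⟩ := this
    set z : Fin n → ℝ := A.mulVec x - r • x with hz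
    have hznn : ∀ i, 0 ≤ z i := fun i => by simp [hz, key i]
    have hzi₀ : 0 < z i₀ := by simp [hz]; linarith
    have hAz : ∀ i, 0 < A.mulVec z i := by
      intro i
      rw [mulVec_apply']
      have : A i i₀ * z i₀ ≤ ∑ j, A i j * z j :=
        Finset.single_le_sum (fun j _ => mul_nonneg (hA i j).le (hznn j)) (Finset.mem_univ i₀)
      exact lt_of_lt_of_le (mul_pos (hA i i₀) hzi₀) this
    set y : Fin n → ℝ := A.mulVec x with hy'
    have hAzy : A.mulVec z = A.mulVec y - r • y := by
      rw [hz, Matrix.mulVec_sub, ← Matrix.mulVec_smul]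
    have hylt : ∀ i, r * y i < A.mulVec y i := by
      intro i
      have := hAz i
      rw [hAzy] at this
      simp only [Pi.sub_apply, Pi.smul_apply, smul_eq_mul] at this
      linarith
    set t : ℝ := Finset.univ.inf' Finset.univ_nonempty (fun i => A.mulVec y i / y i) with ht
    have hrt : r < t := by
      rw [ht, Finset.lt_inf'_iff]
      intro i _
      rw [lt_div_iff₀ (hy i)]
      exact hylt i
    have hty : ∀ i, t * y i ≤ A.mulVec y i := by
      intro i
      have : t ≤ A.mulVec y i / y i := Finset.inf'_le _ (Finset.mem_univ i)
      calc t * y i ≤ (A.mulVec y i / y i) * y i := by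
            exact mul_le_mul_of_nonneg_right this (hy i).le
        _ = A.mulVec y i := div_mul_cancel₀ _ (hy i).ne'
    -- normalize y
    have hs : 0 < ∑ i, y i := Finset.sum_pos (fun i _ => hy i) Finset.univ_nonempty
    set s : ℝ := (∑ i, y i)⁻¹ with hsdef
    have hs0 : 0 < s := inv_pos.2 hs
    have hmem : (s • y) ∈ simplex n := by
      constructor
      · intro i; exact mul_nonneg hs0.le (hy i).le
      · simp [← Finset.mul_sum, hsdef]
        field_simp
    have htS : t ∈ S := by
      refine ⟨s • y, hmem, fun i => ?_⟩
      rw [Matrix.mulVec_smul]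
      simp only [Pi.smul_apply, smul_eq_mul]
      calc t * (s * y i) = s * (t * y i) := by ring
        _ ≤ s * A.mulVec y i := mul_le_mul_of_nonneg_left (hty i) hs0.le
    exact absurd (le_csSup hbdd htS) (not_le.2 hrt)
  have hxpos : ∀ i, 0 < x i := by
    intro i
    have h1 := hy i
    rw [heig] at h1
    simp only [Pi.smul_apply, smul_eq_mul] at h1
    rcases lt_or_eq_of_le (hxmem.1 i) with h | h
    · exact h
    · exfalso; rw [← h, mul_zero] at h1; exact lt_irrefl 0 h1
  exact ⟨r, x, hxmem, hr0, hxpos, heig⟩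

lemma sqrt_mul_le_add_div_two {a b : ℝ} (ha : 0 ≤ a) (hb : 0 ≤ b) :
    Real.sqrt (a * b) ≤ (a + b) / 2 := by
  have h : a * b ≤ ((a + b) / 2) ^ 2 := by nlinarith [sq_nonneg (a - b)]
  calc Real.sqrt (a * b) ≤ Real.sqrt (((a + b) / 2) ^ 2) := Real.sqrt_le_sqrt h
    _ = (a + b) / 2 := Real.sqrt_sq (by positivity)

lemma sum_sqrt_le (A : Matrix (Fin n) (Fin n) ℝ) (hA : ∀ i j, 0 ≤ A i j)
    (x : Fin n → ℝ) (hx : ∀ i, 0 < x i) (r : ℝ) (heig : A.mulVec x = r • x) :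
    ∑ i, ∑ j, Real.sqrt (A i j * A j i) ≤ n * r := by
  have hsum : ∀ i, ∑ j, A i j * x j = r * x i := by
    intro i
    have := congrFun heig i
    simpa [mulVec_apply'] using this
  have key : ∀ i j, Real.sqrt (A i j * A j i) ≤
      (A i j * x j / x i + A j i * x i / x j) / 2 := by
    intro i j
    have h1 : A i j * A j i = (A i j * x j / x i) * (A j i * x i / x j) := by
      field_simp [(hx i).ne', (hx j).ne']
    rw [h1]
    exact sqrt_mul_le_add_div_two (div_nonneg (mul_nonneg (hA i j) (hx j).le) (hx i).le)
      (div_nonneg (mul_nonneg (hA j i) (hx i).le) (hx j).le)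
  calc ∑ i, ∑ j, Real.sqrt (A i j * A j i)
      ≤ ∑ i, ∑ j, (A i j * x j / x i + A j i * x i / x j) / 2 :=
        Finset.sum_le_sum fun i _ => Finset.sum_le_sum fun j _ => key i j
    _ = (∑ i, ∑ j, A i j * x j / x i) / 2 + (∑ i, ∑ j, A j i * x i / x j) / 2 := by
        simp only [add_div, Finset.sum_add_distrib, Finset.sum_div]
    _ = (∑ i, ∑ j, A i j * x j / x i) / 2 + (∑ i, ∑ j, A i j * x j / x i) / 2 := by
        congr 1
        rw [Finset.sum_comm]
    _ = ∑ i, ∑ j, A i j * x j / x i := by ring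
    _ = ∑ i : Fin n, r := by
        refine Finset.sum_congr rfl fun i _ => ?_
        rw [← Finset.sum_div, hsum i, mul_div_assoc, div_self (hx i).ne', mul_one]
    _ = n * r := by simp [Finset.sum_const, Finset.card_univ, nsmul_eq_mul]

lemma mem_spectrum_of_eig (A : Matrix (Fin n) (Fin n) ℝ) (r : ℝ) (x : Fin n → ℝ)
    (hx0 : x ≠ 0) (heig : A.mulVec x = r • x) : r ∈ spectrum ℝ A := by
  rw [spectrum.mem_iff]
  intro hunit
  rw [Matrix.isUnit_iff_isUnit_det] at hunit
  have hM : (algebraMap ℝ (Matrix (Fin n) (Fin n) ℝ) r - A).mulVec x = 0 := by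
    rw [Algebra.algebraMap_eq_smul_one, Matrix.sub_mulVec, Matrix.smul_mulVec,
      Matrix.one_mulVec, heig, sub_self]
  have hdet : (algebraMap ℝ (Matrix (Fin n) (Fin n) ℝ) r - A).det = 0 :=
    (Matrix.exists_mulVec_eq_zero_iff).mp ⟨x, hx0, hM⟩
  rw [hdet] at hunit
  simp at hunit

lemma perron_nonneg (hn : 0 < n) (A : Matrix (Fin n) (Fin n) ℝ) (hA : ∀ i j, 0 ≤ A i j) :
    ∃ r : ℝ, r ∈ spectrum ℝ A ∧ ∑ i, ∑ j, Real.sqrt (A i j * A j i) ≤ n * r := by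
  haveI : Nonempty (Fin n) := ⟨⟨0, hn⟩⟩
  set ε : ℕ → ℝ := fun k => ((k : ℝ) + 1)⁻¹ with hε
  have hεpos : ∀ k, 0 < ε k := fun k => by positivity
  set Ak : ℕ → Matrix (Fin n) (Fin n) ℝ := fun k => Matrix.of fun i j => A i j + ε k with hAk
  have hAkpos : ∀ k i j, 0 < Ak k i j := fun k i j =>
    add_pos_of_nonneg_of_pos (hA i j) (hεpos k)
  have H : ∀ k, ∃ (r : ℝ) (x : Fin n → ℝ), x ∈ simplex n ∧ 0 ≤ r ∧ (∀ i, 0 < x i) ∧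
      (Ak k).mulVec x = r • x := fun k => perron_positive hn _ (hAkpos k)
  choose rs xs hxm hrs0 hxp heig using H
  have heig' : ∀ k i, (Ak k).mulVec (xs k) i = rs k * xs k i := by
    intro k i
    have := congrFun (heig k) i
    simpa using this
  have hlow : ∀ k, ∑ i, ∑ j, Real.sqrt (A i j * A j i) ≤ n * rs k := by
    intro k
    refine le_trans ?_
      (sum_sqrt_le (Ak k) (fun i j => (hAkpos k i j).le) (xs k) (hxp k) (rs k) (heig k))
    refine Finset.sum_le_sum fun i _ => Finset.sum_le_sum fun j _ => ?_
    apply Real.sqrt_le_sqrt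
    have h1 := (hεpos k).le
    have h2 : A i j ≤ Ak k i j := by simp only [hAk, Matrix.of_apply]; linarith
    have h3 : A j i ≤ Ak k j i := by simp only [hAk, Matrix.of_apply]; linarith
    exact mul_le_mul h2 h3 (hA j i) (le_trans (hA i j) h2)
  have hk : ∀ k i, A.mulVec (xs k) i + ε k = rs k * xs k i := by
    intro k i
    have h2 : (Ak k).mulVec (xs k) i = A.mulVec (xs k) i + ε k := by
      simp only [mulVec_apply', hAk, Matrix.of_apply, add_mul]
      rw [Finset.sum_add_distrib, ← Finset.mul_sum, (hxm k).2, mul_one]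
    rw [← h2, heig' k i]
  set M : ℝ := (∑ i, ∑ j, A i j) + (n : ℝ) ^ 2 with hM
  have hub : ∀ k, rs k ≤ M := by
    intro k
    have hε1 : ε k ≤ 1 := by
      rw [hε]
      rw [inv_le_one₀ (by positivity)]
      simp
    calc rs k = ∑ i, rs k * xs k i := by rw [← Finset.mul_sum, (hxm k).2, mul_one]
      _ = ∑ i, (Ak k).mulVec (xs k) i :=
          Finset.sum_congr rfl fun i _ => (heig' k i).symm
      _ ≤ ∑ i, ∑ j, Ak k i j := by
          refine Finset.sum_le_sum fun i _ => ?_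
          rw [mulVec_apply']
          exact Finset.sum_le_sum fun j _ =>
            mul_le_of_le_one_right (hAkpos k i j).le (le_one_of_mem_simplex (hxm k) j)
      _ = (∑ i, ∑ j, A i j) + (n : ℝ) ^ 2 * ε k := by
          simp only [hAk, Matrix.of_apply, Finset.sum_add_distrib, Finset.sum_const,
            Finset.card_univ, Fintype.card_fin, nsmul_eq_mul]
          ring
      _ ≤ M := by
          rw [hM]
          have : (n : ℝ) ^ 2 * ε k ≤ (n : ℝ) ^ 2 * 1 :=
            mul_le_mul_of_nonneg_left hε1 (by positivity)
          linarith
  have hcs : IsCompact ((Set.Icc (0 : ℝ) M) ×ˢ simplex n) :=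
    isCompact_Icc.prod isCompact_simplex
  have hmem : ∀ k, ((rs k, xs k) : ℝ × (Fin n → ℝ)) ∈ (Set.Icc (0 : ℝ) M) ×ˢ simplex n :=
    fun k => ⟨⟨hrs0 k, hub k⟩, hxm k⟩
  obtain ⟨⟨r, x⟩, hrx, φ, hφ, hlim⟩ := hcs.tendsto_subseq hmem
  have hrlim : Tendsto (fun k => rs (φ k)) atTop (𝓝 r) :=
    (continuous_fst.tendsto _).comp hlim
  have hxlim : Tendsto (fun k => xs (φ k)) atTop (𝓝 x) :=
    (continuous_snd.tendsto _).comp hlim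
  have hεlim : Tendsto (fun k => ε (φ k)) atTop (𝓝 0) := by
    have h1 : Tendsto ε atTop (𝓝 0) := by
      simpa [hε, one_div] using tendsto_one_div_add_atTop_nhds_zero_nat (𝕜 := ℝ)
    exact h1.comp hφ.tendsto_atTop
  have heq : A.mulVec x = r • x := by
    funext i
    have t1 : Tendsto (fun k => A.mulVec (xs (φ k)) i + ε (φ k)) atTop
        (𝓝 (A.mulVec x i + 0)) :=
      (((continuous_mulVec A i).tendsto x).comp hxlim).add hεlim
    have t2 : Tendsto (fun k => rs (φ k) * xs (φ k) i) atTop (𝓝 (r * x i)) :=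
      hrlim.mul (((continuous_apply i).tendsto x).comp hxlim)
    have t1' : Tendsto (fun k => rs (φ k) * xs (φ k) i) atTop (𝓝 (A.mulVec x i + 0)) := by
      refine t1.congr fun k => hk (φ k) i
    have := tendsto_nhds_unique t1' t2
    simpa [Pi.smul_apply, smul_eq_mul] using this
  have hx0 : x ≠ 0 := by
    intro h
    have h1 := hrx.2.2
    rw [h] at h1
    simp at h1
  have hlow' : ∑ i, ∑ j, Real.sqrt (A i j * A j i) ≤ n * r := by
    have t : Tendsto (fun k => (n : ℝ) * rs (φ k)) atTop (𝓝 ((n : ℝ) * r)) :=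
      tendsto_const_nhds.mul hrlim
    exact le_of_tendsto_of_tendsto' tendsto_const_nhds t fun k => hlow (φ k)
  exact ⟨r, mem_spectrum_of_eig A r x hx0 heq, hlow'⟩


end SpectralAux

open Finset

/-- For an `n × n` matrix `A` with nonnegative real entries, the spectral radius satisfies
`r(A) ≥ (1/n) ∑_{i,j} √(a_{ij} a_{ji})`, the sum ranging over all ordered pairs. -/
theorem spectralRadius_ge_sum_sqrt
    (n : ℕ) (hn : 0 < n) (A : Matrix (Fin n) (Fin n) ℝ) (hA : ∀ i j, 0 ≤ A i j) :
    ENNReal.ofReal ((1 / (n : ℝ)) * ∑ i : Fin n, ∑ j : Fin n, Real.sqrt (A i j * A j i))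
      ≤ spectralRadius ℝ A := by
  obtain ⟨r, hrspec, hr⟩ := SpectralAux.perron_nonneg hn A hA
  have hc : (1 / (n : ℝ)) * ∑ i : Fin n, ∑ j : Fin n, Real.sqrt (A i j * A j i) ≤ r := by
    rw [div_mul_eq_mul_div, one_mul, div_le_iff₀ (by positivity : (0:ℝ) < (n:ℝ))]
    linarith [hr]
  calc ENNReal.ofReal ((1 / (n : ℝ)) * ∑ i : Fin n, ∑ j : Fin n, Real.sqrt (A i j * A j i))
      ≤ ENNReal.ofReal r := ENNReal.ofReal_le_ofReal hc
    _ ≤ (‖r‖₊ : ENNReal) := Real.ofReal_le_enorm r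
    _ ≤ spectralRadius ℝ A :=
        le_iSup₂ (f := fun k (_ : k ∈ spectrum ℝ A) => (‖k‖₊ : ENNReal)) r hrspec
end

section
/- If S is a feasible set of links in the non-fading model (so a_S(i) ≤ 1 for every i ∈ S) and Q(i) denotes the probability that link i succeeds under Rayleigh fading when all links of S transmit (with success meaning the exponentially-distributed signal exceeds β times the sum of independent exponentially-distributed interferences with the given means), then Q(i) ≥ e^{−A(i)} ≥ 1/e for each i ∈ S, where A(i) = Σ_{j∈S∖{i}} a_j(i); hence the expected number of successful links is at least |S|/e. -/
open MeasureTheory ProbabilityTheory Finset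

section Helpers
open Real
open scoped ENNReal NNReal

private lemma myExpMeasure_eq (r : ℝ) :
    expMeasure r = (volume : Measure ℝ).withDensity (exponentialPDF r) := rfl

private lemma myExpMeasure_Iic {r : ℝ} (hr : 0 < r) (t : ℝ) :
    expMeasure r (Set.Iic t) = ENNReal.ofReal (if 0 ≤ t then 1 - exp (-(r * t)) else 0) := by
  rw [myExpMeasure_eq, withDensity_apply _ measurableSet_Iic,
    lintegral_exponentialPDF_eq_antiDeriv hr t]

private lemma myExpMeasure_Ioi {r : ℝ} (hr : 0 < r) {t : ℝ} (ht : 0 ≤ t) :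
    expMeasure r (Set.Ioi t) = ENNReal.ofReal (exp (-(r * t))) := by
  have : IsProbabilityMeasure (expMeasure r) := isProbabilityMeasure_expMeasure hr
  have h1 : Set.Ioi t = (Set.Iic t)ᶜ := by simp
  rw [h1, prob_compl_eq_one_sub measurableSet_Iic, myExpMeasure_Iic hr, if_pos ht]
  have he : exp (-(r * t)) ≤ 1 := exp_le_one_iff.2 (by nlinarith)
  have h2 : (1 : ℝ≥0∞) = ENNReal.ofReal 1 := by simp
  rw [h2, ← ENNReal.ofReal_sub _ (by nlinarith [exp_pos (-(r*t))])]
  norm_num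

private lemma myExpMeasure_tail {r : ℝ} (hr : 0 < r) (t : ℝ) :
    ENNReal.ofReal (exp (-(r * max t 0))) ≤ expMeasure r (Set.Ioi t) := by
  rcases le_or_gt 0 t with h | h
  · rw [max_eq_left h, myExpMeasure_Ioi hr h]
  · rw [max_eq_right h.le]
    calc ENNReal.ofReal (exp (-(r * 0))) = expMeasure r (Set.Ioi 0) :=
          (myExpMeasure_Ioi hr le_rfl).symm
    _ ≤ expMeasure r (Set.Ioi t) := measure_mono (Set.Ioi_subset_Ioi h.le)

private lemma myExpMeasure_neg (r : ℝ) : expMeasure r (Set.Iio 0) = 0 := by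
  rw [myExpMeasure_eq, withDensity_apply _ measurableSet_Iio]
  rw [setLIntegral_congr_fun measurableSet_Iio
    (fun x (hx : x < 0) => exponentialPDF_of_neg hx)]
  simp

private lemma myExpPDF_mul_id_eq (r : ℝ) :
    (fun x => exponentialPDFReal r x • x) =
      Set.indicator (Set.Ioi 0) (fun x => r * (x * exp (-(r * x)))) := by
  funext x
  rw [exponentialPDFReal, gammaPDFReal]
  rcases lt_trichotomy x 0 with h | h | h
  · simp [not_le.2 h, Set.indicator_of_notMem (by simpa using h.le : x ∉ Set.Ioi 0)]
  · subst h; simp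
  · rw [Set.indicator_of_mem (by simpa using h), if_pos h.le]
    simp only [smul_eq_mul, Real.Gamma_one, sub_self, Real.rpow_zero, Real.rpow_one, mul_one,
      div_one]
    ring

private lemma myIntegrableOn_mul_exp {r : ℝ} (hr : 0 < r) :
    IntegrableOn (fun x => r * (x * exp (-(r * x)))) (Set.Ioi 0) := by
  apply Integrable.const_mul
  have h := integrableOn_rpow_mul_exp_neg_mul_rpow (p := 1) (s := 1) (b := r) (by norm_num)
    (by norm_num) hr
  apply h.congr_fun ?_ measurableSet_Ioi
  intro x hx
  simp only [Real.rpow_one, neg_mul]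

private lemma myIntegrable_pdf_mul_id {r : ℝ} (hr : 0 < r) :
    Integrable (fun x => exponentialPDFReal r x • x) (volume : Measure ℝ) := by
  rw [myExpPDF_mul_id_eq]
  exact (myIntegrableOn_mul_exp hr).integrable_indicator measurableSet_Ioi

private lemma myExp_toNNReal_coe (r : ℝ) :
    (fun x => ((Real.toNNReal (exponentialPDFReal r x) : ℝ≥0) : ℝ≥0∞)) = exponentialPDF r := by
  funext x
  simp [exponentialPDF, ENNReal.ofReal]

private lemma myExpMeasure_integrable_id {r : ℝ} (hr : 0 < r) :
    Integrable (fun x => x) (expMeasure r) := by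
  have h0 : expMeasure r
      = (volume : Measure ℝ).withDensity
          (fun x => ((Real.toNNReal (exponentialPDFReal r x) : ℝ≥0) : ℝ≥0∞)) := by
    rw [myExp_toNNReal_coe r]; rfl
  rw [h0, integrable_withDensity_iff_integrable_smul (by measurability)]
  have h := myIntegrable_pdf_mul_id hr
  apply h.congr
  filter_upwards with x
  rw [NNReal.smul_def, Real.coe_toNNReal _ (exponentialPDFReal_nonneg hr x)]

private lemma myExpMeasure_mean {r : ℝ} (hr : 0 < r) :
    ∫ x, x ∂(expMeasure r) = 1 / r := by
  have h0 : expMeasure r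
      = (volume : Measure ℝ).withDensity
          (fun x => ((Real.toNNReal (exponentialPDFReal r x) : ℝ≥0) : ℝ≥0∞)) := by
    rw [myExp_toNNReal_coe r]; rfl
  rw [h0, integral_withDensity_eq_integral_smul (by measurability) _]
  simp only [NNReal.smul_def]
  have hcongr : ∫ x, (Real.toNNReal (exponentialPDFReal r x) : ℝ) • x ∂(volume : Measure ℝ)
      = ∫ x, exponentialPDFReal r x • x ∂(volume : Measure ℝ) := by
    congr 1; funext x
    rw [Real.coe_toNNReal _ (exponentialPDFReal_nonneg hr x)]
  rw [hcongr, myExpPDF_mul_id_eq, integral_indicator measurableSet_Ioi,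
    integral_const_mul]
  have h2 : ∫ x in Set.Ioi 0, x * exp (-(r * x)) = (1 / r) ^ (2:ℝ) * Real.Gamma 2 := by
    rw [← integral_rpow_mul_exp_neg_mul_Ioi (by norm_num : (0:ℝ) < 2) hr]
    apply setIntegral_congr_fun measurableSet_Ioi
    intro x hx
    norm_num
  rw [h2, Real.Gamma_two, mul_one]
  rw [show ((2:ℝ)) = ((2:ℕ):ℝ) by norm_num, Real.rpow_natCast]
  field_simp

end Helpers


/-- If `S` is feasible in the non-fading model (total affectance at most `1` on each link),
then under Rayleigh fading (independent exponential signals and interferences with the given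
means), every link succeeds with probability at least `e^{-A(i)} ≥ 1/e`, and the expected
number of successful links is at least `|S|/e`. -/
theorem rayleigh_feasible_success_probability
    {Ω : Type*} [MeasurableSpace Ω] (P : Measure Ω) [IsProbabilityMeasure P]
    {ι : Type*} [Fintype ι] [DecidableEq ι]
    (Sval : ι → ℝ) (Ival : ι → ι → ℝ)
    (hS : ∀ i, 0 < Sval i) (hI : ∀ j i, 0 < Ival j i)
    (β : ℝ) (hβ : 0 < β)
    (hfeas : ∀ i, ∑ j ∈ Finset.univ.erase i, β * Ival j i / Sval i ≤ 1)
    (R : ι → Ω → ℝ) (RI : ι → ι → Ω → ℝ)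
    (hRmeas : ∀ i, Measurable (R i)) (hRImeas : ∀ j i, Measurable (RI j i))
    (hRd : ∀ i, P.map (R i) = expMeasure (1 / Sval i))
    (hRId : ∀ j i, P.map (RI j i) = expMeasure (1 / Ival j i))
    (hindep : iIndepFun
      (Sum.elim R (fun q : ι × ι => RI q.1 q.2)) P) :
    (∀ i, ENNReal.ofReal (Real.exp (-(∑ j ∈ Finset.univ.erase i, β * Ival j i / Sval i)))
        ≤ P {ω | β * ∑ j ∈ Finset.univ.erase i, RI j i ω < R i ω}) ∧
    (∀ i, ENNReal.ofReal (Real.exp (-1))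
        ≤ P {ω | β * ∑ j ∈ Finset.univ.erase i, RI j i ω < R i ω}) ∧
    ((Fintype.card ι : ℝ) / Real.exp 1 ≤
      ∑ i, (P {ω | β * ∑ j ∈ Finset.univ.erase i, RI j i ω < R i ω}).toReal) := by
  classical
  have hfmeas : ∀ x : ι ⊕ ι × ι, Measurable (Sum.elim R (fun q : ι × ι => RI q.1 q.2) x) := by
    rintro (a | q)
    · exact hRmeas a
    · exact hRImeas q.1 q.2
  -- Part 1
  have h1 : ∀ i, ENNReal.ofReal
      (Real.exp (-(∑ j ∈ Finset.univ.erase i, β * Ival j i / Sval i)))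
      ≤ P {ω | β * ∑ j ∈ Finset.univ.erase i, RI j i ω < R i ω} := by
    intro i
    set r : ℝ := 1 / Sval i with hr_def
    have hrpos : 0 < r := by have := hS i; positivity
    set g : Ω → ℝ := fun ω => β * ∑ j ∈ Finset.univ.erase i, RI j i ω with hg_def
    have hgmeas : Measurable g :=
      (Finset.measurable_sum _ fun j _ => hRImeas j i).const_mul β
    -- independence of g and R i
    have hind : IndepFun g (R i) P := by
      set T : Finset (ι ⊕ ι × ι) := (Finset.univ.erase i).image (fun j => Sum.inr (j, i)) with hT
      have hdisj : Disjoint ({Sum.inl i} : Finset (ι ⊕ ι × ι)) T := by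
        simp [Finset.disjoint_left, hT]
      have hbase := hindep.indepFun_finset {Sum.inl i} T hdisj hfmeas
      have hφ1 : Measurable fun v : (x : ({Sum.inl i} : Finset (ι ⊕ ι × ι))) → ℝ =>
          v ⟨Sum.inl i, Finset.mem_singleton_self _⟩ := measurable_pi_apply _
      have hφ2 : Measurable fun v : (x : T) → ℝ =>
          β * ∑ j ∈ (Finset.univ.erase i).attach,
            v ⟨Sum.inr (j.1, i), Finset.mem_image_of_mem _ j.2⟩ := by
        apply Measurable.const_mul
        exact Finset.measurable_sum _ fun j _ => measurable_pi_apply _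
      have h := (hbase.comp hφ1 hφ2).symm
      convert h using 1
      funext ω
      simp only [Function.comp]
      rw [hg_def]
      simp only
      congr 1
      rw [← Finset.sum_attach (Finset.univ.erase i) (fun j => RI j i ω)]
      exact Finset.sum_congr rfl fun x _ => rfl
      rfl
    have hind' := (indepFun_iff_map_prod_eq_prod_map_map hgmeas.aemeasurable
      (hRmeas i).aemeasurable).mp hind
    -- integrability and mean of RI j i
    have hRIint : ∀ j, Integrable (RI j i) P := by
      intro j
      have h := myExpMeasure_integrable_id (r := 1 / Ival j i)
        (by have := hI j i; positivity)
      rw [← hRId j i] at h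
      exact (integrable_map_measure aestronglyMeasurable_id
        (hRImeas j i).aemeasurable).mp h
    have hRImean : ∀ j, ∫ ω, RI j i ω ∂P = Ival j i := by
      intro j
      have h := integral_map (μ := P) (hRImeas j i).aemeasurable
        (f := fun x : ℝ => x) aestronglyMeasurable_id
      rw [hRId j i, myExpMeasure_mean (by have := hI j i; positivity)] at h
      rw [← h, one_div_one_div]
    have hRInn : ∀ j, ∀ᵐ ω ∂P, 0 ≤ RI j i ω := by
      intro j
      have h : P {ω | RI j i ω < 0} = 0 := by
        have : {ω | RI j i ω < 0} = RI j i ⁻¹' Set.Iio 0 := rfl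
        rw [this, ← Measure.map_apply (hRImeas j i) measurableSet_Iio, hRId j i,
          myExpMeasure_neg]
      filter_upwards [measure_eq_zero_iff_ae_notMem.mp h] with ω hω
      simpa using hω
    have hgnn : ∀ᵐ ω ∂P, 0 ≤ g ω := by
      have : ∀ᵐ ω ∂P, ∀ j : ι, 0 ≤ RI j i ω := ae_all_iff.mpr fun j => hRInn j
      filter_upwards [this] with ω hω
      exact mul_nonneg hβ.le (Finset.sum_nonneg fun j _ => hω j)
    have hgint : Integrable g P :=
      (integrable_finset_sum _ fun j _ => hRIint j).const_mul β
    have hgmean : ∫ ω, g ω ∂P = β * ∑ j ∈ Finset.univ.erase i, Ival j i := by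
      rw [hg_def]
      simp only
      rw [integral_const_mul, integral_finset_sum _ fun j _ => hRIint j]
      congr 1
      exact Finset.sum_congr rfl fun j _ => hRImean j
    -- rewrite the probability as a lintegral
    have hms : MeasurableSet {p : ℝ × ℝ | p.1 < p.2} :=
      measurableSet_lt measurable_fst measurable_snd
    have key1 : P {ω | g ω < R i ω} = ∫⁻ t, expMeasure r (Set.Ioi t) ∂(P.map g) := by
      have hset : {ω | g ω < R i ω}
          = (fun ω => (g ω, R i ω)) ⁻¹' {p : ℝ × ℝ | p.1 < p.2} := rfl
      rw [hset, ← Measure.map_apply (hgmeas.prodMk (hRmeas i)) hms, hind',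
        Measure.prod_apply hms, hRd i]
      rfl
    set μg := P.map g with hμg
    have : IsProbabilityMeasure μg := Measure.isProbabilityMeasure_map hgmeas.aemeasurable
    have hφmeas : Measurable fun t : ℝ => Real.exp (-(r * max t 0)) := by fun_prop
    have key2 : ∫⁻ t, ENNReal.ofReal (Real.exp (-(r * max t 0))) ∂μg
        ≤ ∫⁻ t, expMeasure r (Set.Ioi t) ∂μg :=
      lintegral_mono fun t => myExpMeasure_tail hrpos t
    have hφint : Integrable (fun t => Real.exp (-(r * max t 0))) μg := by
      apply Integrable.mono' (integrable_const 1) hφmeas.aestronglyMeasurable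
      filter_upwards with t
      rw [Real.norm_eq_abs, abs_of_pos (Real.exp_pos _)]
      apply Real.exp_le_one_iff.2
      have : 0 ≤ r * max t 0 := mul_nonneg hrpos.le (le_max_right _ _)
      linarith
    have key3 : ENNReal.ofReal (∫ t, Real.exp (-(r * max t 0)) ∂μg)
        = ∫⁻ t, ENNReal.ofReal (Real.exp (-(r * max t 0))) ∂μg :=
      ofReal_integral_eq_lintegral_ofReal hφint (ae_of_all _ fun t => (Real.exp_pos _).le)
    have key4 : ∫ t, Real.exp (-(r * max t 0)) ∂μg
        = ∫ ω, Real.exp (-(r * max (g ω) 0)) ∂P :=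
      integral_map hgmeas.aemeasurable hφmeas.aestronglyMeasurable
    -- Jensen
    have hfint : Integrable (fun ω => -(r * max (g ω) 0)) P :=
      ((hgint.pos_part.const_mul r).neg)
    have hcomp : Integrable (Real.exp ∘ fun ω => -(r * max (g ω) 0)) P := by
      apply Integrable.mono' (integrable_const 1)
        ((Real.measurable_exp.comp ((hgmeas.max measurable_const).const_mul r).neg).aestronglyMeasurable)
      filter_upwards with ω
      rw [Function.comp_apply, Real.norm_eq_abs, abs_of_pos (Real.exp_pos _)]
      apply Real.exp_le_one_iff.2
      have : 0 ≤ r * max (g ω) 0 := mul_nonneg hrpos.le (le_max_right _ _)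
      show -(r * max (g ω) 0) ≤ 0
      linarith
    have hjensen := convexOn_exp.map_integral_le (μ := P)
      (f := fun ω => -(r * max (g ω) 0)) Real.continuous_exp.continuousOn isClosed_univ
      (ae_of_all _ fun ω => Set.mem_univ _) hfint hcomp
    -- compute the inner integral
    have hmaxeq : (fun ω => max (g ω) 0) =ᵐ[P] g := by
      filter_upwards [hgnn] with ω hω
      exact max_eq_left hω
    have hint_eq : ∫ ω, -(r * max (g ω) 0) ∂P
        = -(∑ j ∈ Finset.univ.erase i, β * Ival j i / Sval i) := by
      rw [integral_neg, integral_const_mul, integral_congr_ae hmaxeq, hgmean]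
      congr 1
      rw [Finset.mul_sum, hr_def]
      rw [Finset.mul_sum]
      apply Finset.sum_congr rfl
      intro j _
      field_simp
    rw [hint_eq] at hjensen
    calc ENNReal.ofReal (Real.exp (-(∑ j ∈ Finset.univ.erase i, β * Ival j i / Sval i)))
        ≤ ENNReal.ofReal (∫ ω, Real.exp (-(r * max (g ω) 0)) ∂P) := by
          apply ENNReal.ofReal_le_ofReal
          exact le_trans hjensen (le_of_eq (integral_congr_ae (ae_of_all _ fun ω => rfl)))
      _ = ENNReal.ofReal (∫ t, Real.exp (-(r * max t 0)) ∂μg) := by rw [key4]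
      _ = ∫⁻ t, ENNReal.ofReal (Real.exp (-(r * max t 0))) ∂μg := key3
      _ ≤ ∫⁻ t, expMeasure r (Set.Ioi t) ∂μg := key2
      _ = P {ω | g ω < R i ω} := key1.symm
  have h2 : ∀ i, ENNReal.ofReal (Real.exp (-1))
      ≤ P {ω | β * ∑ j ∈ Finset.univ.erase i, RI j i ω < R i ω} := by
    intro i
    refine le_trans ?_ (h1 i)
    apply ENNReal.ofReal_le_ofReal
    apply Real.exp_le_exp.2
    exact neg_le_neg (hfeas i)
  refine ⟨h1, h2, ?_⟩
  have : ∀ i, Real.exp (-1)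
      ≤ (P {ω | β * ∑ j ∈ Finset.univ.erase i, RI j i ω < R i ω}).toReal := by
    intro i
    have := ENNReal.toReal_mono (measure_ne_top P _) (h2 i)
    rwa [ENNReal.toReal_ofReal (Real.exp_pos _).le] at this
  calc (Fintype.card ι : ℝ) / Real.exp 1 = ∑ _i : ι, Real.exp (-1) := by
        rw [Finset.sum_const, Finset.card_univ, nsmul_eq_mul, Real.exp_neg]
        rw [div_eq_mul_inv]
    _ ≤ _ := Finset.sum_le_sum fun i _ => this i
end

section
/- Let H be a finite set of links with weights w_i ≥ 0, success probabilities Q(i) ≤ q_i, and expected affectances A(i) = Σ_{j∈H} q_j a_j(i) ≤ k for all i ∈ H (k > 0 fixed). Form a random set X including each i ∈ H independently with probability q_i/(2k), and let S_X = { i ∈ X : Σ_{j∈X, j≠i} a_j(i) ≤ 1 }. Then E[Σ_{i∈S_X} w_i] ≥ (1/(4k))·Σ_{i∈H} w_i q_i ≥ (1/(4k))·Σ_{i∈H} w_i Q(i). In particular there exists a deterministic subset S ⊆ H with affectance at most 1 on each of its members and weight at least (1/(4k))·Σ_{i∈H} w_i Q(i). -/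
open MeasureTheory ProbabilityTheory Finset

/-- Probabilistic sparsification: if every link `i ∈ H` has expected affectance
`A(i) = ∑_j q_j a_j(i) ≤ k` and success probability `Q(i) ≤ q_i`, and a random set `X`
includes each link independently with probability `q_i/(2k)`, then the expected weight of
the feasible part `S_X = {i ∈ X : a_X(i) ≤ 1}` is at least `(1/(4k))·∑ᵢ wᵢ qᵢ ≥
(1/(4k))·∑ᵢ wᵢ Q(i)`; in particular some deterministic feasible subset has weight at least
`(1/(4k))·∑ᵢ wᵢ Q(i)`. -/
theorem probabilistic_sparsification
    {Ω : Type*} [MeasurableSpace Ω] (P : Measure Ω) [IsProbabilityMeasure P]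
    {ι : Type*} [Fintype ι] [DecidableEq ι]
    (w : ι → ℝ) (hw : ∀ i, 0 ≤ w i)
    (a : ι → ι → ℝ) (ha : ∀ j i, 0 ≤ a j i)
    (q : ι → ℝ) (hq : ∀ i, q i ∈ Set.Icc (0 : ℝ) 1)
    (Q : ι → ℝ) (hQ : ∀ i, 0 ≤ Q i ∧ Q i ≤ q i)
    (k : ℝ) (hk : 0 < k)
    (hA : ∀ i, ∑ j, q j * a j i ≤ k)
    (B : ι → Ω → Bool) (hmeas : ∀ i, Measurable (B i))
    (hindep : iIndepFun B P)
    (hprob : ∀ i, P {ω | B i ω = true} = ENNReal.ofReal (q i / (2 * k))) :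
    ((1 / (4 * k)) * ∑ i, w i * q i ≤
      ∫ ω, ∑ i ∈ Finset.univ.filter (fun i => B i ω = true ∧
        ∑ j ∈ (Finset.univ.filter fun j => B j ω = true).erase i, a j i ≤ 1), w i ∂P) ∧
    ((1 / (4 * k)) * ∑ i, w i * Q i ≤
      ∫ ω, ∑ i ∈ Finset.univ.filter (fun i => B i ω = true ∧
        ∑ j ∈ (Finset.univ.filter fun j => B j ω = true).erase i, a j i ≤ 1), w i ∂P) ∧
    (∃ S : Finset ι, (∀ i ∈ S, ∑ j ∈ S.erase i, a j i ≤ 1) ∧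
      (1 / (4 * k)) * ∑ i, w i * Q i ≤ ∑ i ∈ S, w i) := by
  classical
  have hk2 : (0:ℝ) < 2 * k := by linarith
  have hp0 : ∀ i, 0 ≤ q i / (2 * k) := fun i => div_nonneg (hq i).1 hk2.le
  -- measurable sets where a link is chosen
  have hBset : ∀ j, MeasurableSet {ω | B j ω = true} := by
    intro j
    exact (hmeas j) (by trivial : MeasurableSet {b : Bool | b = true})
  -- the affectance random variable on link i from the other links
  set Y : ι → Ω → ℝ := fun i ω => ∑ j ∈ Finset.univ.erase i,
      Set.indicator {ω | B j ω = true} (fun _ => a j i) ω with hY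
  -- rewrite of the affectance sum
  have hsum : ∀ i ω, (∑ j ∈ (Finset.univ.filter fun j => B j ω = true).erase i, a j i)
      = Y i ω := by
    intro i ω
    rw [hY]
    rw [← Finset.filter_erase]
    rw [Finset.sum_filter]
    refine Finset.sum_congr rfl fun j _ => ?_
    by_cases h : B j ω = true <;> simp [Set.indicator_apply, h]
  -- the events
  set E : ι → Set Ω := fun i => {ω | B i ω = true} ∩ {ω | Y i ω ≤ 1} with hEdef
  -- integrability of Y i
  have hYint : ∀ i, Integrable (Y i) P := by
    intro i
    exact integrable_finset_sum _ fun j _ => (integrable_const (a j i)).indicator (hBset j)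
  have hYmeas : ∀ i, Measurable (Y i) := by
    intro i
    exact Finset.measurable_sum _ fun j _ =>
      (measurable_const.indicator (hBset j))
  have hYnonneg : ∀ i ω, 0 ≤ Y i ω := by
    intro i ω
    exact Finset.sum_nonneg fun j _ => Set.indicator_nonneg (fun _ _ => ha j i) ω
  -- expectation of Y i
  have hYexp : ∀ i, ∫ ω, Y i ω ∂P ≤ 1 / 2 := by
    intro i
    rw [hY]
    rw [integral_finset_sum _ fun j _ => (integrable_const (a j i)).indicator (hBset j)]
    have : ∀ j ∈ Finset.univ.erase i,
        (∫ ω, Set.indicator {ω | B j ω = true} (fun _ => a j i) ω ∂P)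
          = (q j / (2*k)) * a j i := by
      intro j _
      rw [integral_indicator_const (a j i) (hBset j), measureReal_def, hprob j, smul_eq_mul,
        ENNReal.toReal_ofReal (hp0 j)]
    rw [Finset.sum_congr rfl this]
    have h1 : ∑ j ∈ Finset.univ.erase i, q j / (2*k) * a j i
        ≤ ∑ j, q j / (2*k) * a j i := by
      refine Finset.sum_le_sum_of_subset_of_nonneg (Finset.subset_univ _) ?_
      intro j _ _
      exact mul_nonneg (hp0 j) (ha j i)
    have h2 : ∑ j, q j / (2*k) * a j i = (1/(2*k)) * ∑ j, q j * a j i := by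
      rw [Finset.mul_sum]; refine Finset.sum_congr rfl fun j _ => by ring
    have h3 : (1/(2*k)) * ∑ j, q j * a j i ≤ (1/(2*k)) * k := by
      refine mul_le_mul_of_nonneg_left (hA i) (by positivity)
    calc ∑ j ∈ Finset.univ.erase i, q j / (2*k) * a j i
        ≤ (1/(2*k)) * ∑ j, q j * a j i := by rw [← h2]; exact h1
      _ ≤ (1/(2*k)) * k := h3
      _ = 1/2 := by field_simp
  -- Markov: P(Y i ≤ 1) ≥ 1/2
  have hG : ∀ i, ENNReal.ofReal (1/2) ≤ P {ω | Y i ω ≤ 1} := by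
    intro i
    have hmr := mul_meas_ge_le_integral_of_nonneg
      (Filter.Eventually.of_forall (hYnonneg i)) (hYint i) 1
    rw [one_mul] at hmr
    have hmark : (P {ω | 1 ≤ Y i ω}).toReal ≤ 1/2 := hmr.trans (hYexp i)
    have hfin : P {ω | 1 ≤ Y i ω} ≠ ⊤ := measure_ne_top _ _
    have hle : P {ω | 1 ≤ Y i ω} ≤ ENNReal.ofReal (1/2) := by
      rw [← ENNReal.ofReal_toReal hfin]
      exact ENNReal.ofReal_le_ofReal hmark
    have hsubset : {ω | 1 ≤ Y i ω}ᶜ ⊆ {ω | Y i ω ≤ 1} := by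
      intro ω hω
      simp only [Set.mem_compl_iff, Set.mem_setOf_eq, not_le] at hω
      exact le_of_lt hω
    have hms : MeasurableSet {ω | 1 ≤ Y i ω} := measurableSet_le measurable_const (hYmeas i)
    calc ENNReal.ofReal (1/2) = 1 - ENNReal.ofReal (1/2) := by
          rw [← ENNReal.ofReal_one, ← ENNReal.ofReal_sub _ (by norm_num)]
          norm_num
      _ ≤ 1 - P {ω | 1 ≤ Y i ω} := by exact tsub_le_tsub le_rfl hle
      _ = P {ω | 1 ≤ Y i ω}ᶜ := (prob_compl_eq_one_sub hms).symm
      _ ≤ P {ω | Y i ω ≤ 1} := measure_mono hsubset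
  -- independence : P(E i) = P(B i) * P(Y i ≤ 1)
  have hEeq : ∀ i, P (E i) = P {ω | B i ω = true} * P {ω | Y i ω ≤ 1} := by
    intro i
    have hdisj : Disjoint ({i} : Finset ι) (Finset.univ.erase i) := by
      simp [Finset.disjoint_left]
    have hind := hindep.indepFun_finset {i} (Finset.univ.erase i) hdisj hmeas
    -- sets in the product spaces
    set s : Set (↥({i} : Finset ι) → Bool) := {v | v ⟨i, Finset.mem_singleton_self i⟩ = true}
      with hs
    set t : Set (↥(Finset.univ.erase i) → Bool) :=
      {v | ∑ j ∈ (Finset.univ.erase i).attach, (if v j then a (j:ι) i else 0) ≤ 1} with ht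
    have hsm : MeasurableSet s := (Set.toFinite s).measurableSet
    have htm : MeasurableSet t := (Set.toFinite t).measurableSet
    have h := hind.measure_inter_preimage_eq_mul s t hsm htm
    have hpre1 : (fun ω (j : ↥({i} : Finset ι)) => B j ω) ⁻¹' s = {ω | B i ω = true} := by
      ext ω; simp [hs]
    have hpre2 : (fun ω (j : ↥(Finset.univ.erase i)) => B j ω) ⁻¹' t
        = {ω | Y i ω ≤ 1} := by
      ext ω
      simp only [Set.mem_preimage, ht, Set.mem_setOf_eq, hY]
      constructor
      · intro h'
        convert h' using 1
        rw [← Finset.sum_attach (Finset.univ.erase i)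
          (fun j => Set.indicator {ω | B j ω = true} (fun _ => a j i) ω)]
        refine Finset.sum_congr rfl fun j _ => ?_
        by_cases hb : B (j:ι) ω = true <;> simp [Set.indicator_apply, hb]
      · intro h'
        convert h' using 1
        rw [← Finset.sum_attach (Finset.univ.erase i)
          (fun j => Set.indicator {ω | B j ω = true} (fun _ => a j i) ω)]
        refine Finset.sum_congr rfl fun j _ => ?_
        by_cases hb : B (j:ι) ω = true <;> simp [Set.indicator_apply, hb]
    rw [hpre1, hpre2] at h
    rw [hEdef]
    exact h
  -- lower bound on the probability of E i
  have hEms : ∀ i, MeasurableSet (E i) := by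
    intro i
    exact (hBset i).inter (measurableSet_le (hYmeas i) measurable_const)
  have hElb : ∀ i, q i / (4 * k) ≤ (P (E i)).toReal := by
    intro i
    have h1 : ENNReal.ofReal (q i / (2*k)) * ENNReal.ofReal (1/2) ≤ P (E i) := by
      rw [hEeq i, hprob i]
      exact mul_le_mul_right (hG i) _
    rw [← ENNReal.ofReal_mul (hp0 i)] at h1
    have h2 : q i / (2*k) * (1/2) = q i / (4*k) := by ring
    rw [h2] at h1
    have := ENNReal.toReal_mono (measure_ne_top P (E i)) h1
    rwa [ENNReal.toReal_ofReal (div_nonneg (hq i).1 (by linarith))] at this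
  -- the integrand as a sum of indicators
  have hfeq : ∀ ω, (∑ i ∈ Finset.univ.filter (fun i => B i ω = true ∧
        ∑ j ∈ (Finset.univ.filter fun j => B j ω = true).erase i, a j i ≤ 1), w i)
      = ∑ i, Set.indicator (E i) (fun _ => w i) ω := by
    intro ω
    rw [Finset.sum_filter]
    refine Finset.sum_congr rfl fun i _ => ?_
    by_cases h : B i ω = true ∧ ∑ j ∈ (Finset.univ.filter fun j => B j ω = true).erase i,
        a j i ≤ 1
    · rw [if_pos h, Set.indicator_of_mem]
      exact ⟨h.1, show Y i ω ≤ 1 by rw [← hsum i ω]; exact h.2⟩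
    · rw [if_neg h, Set.indicator_of_notMem]
      intro hmem
      have h2 : Y i ω ≤ 1 := hmem.2
      rw [← hsum i ω] at h2
      exact h ⟨hmem.1, h2⟩
  -- compute the integral
  have hint : (∫ ω, ∑ i ∈ Finset.univ.filter (fun i => B i ω = true ∧
        ∑ j ∈ (Finset.univ.filter fun j => B j ω = true).erase i, a j i ≤ 1), w i ∂P)
      = ∑ i, (P (E i)).toReal * w i := by
    rw [integral_congr_ae (Filter.Eventually.of_forall hfeq)]
    rw [integral_finset_sum _ fun i _ => (integrable_const (w i)).indicator (hEms i)]
    refine Finset.sum_congr rfl fun i _ => ?_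
    rw [integral_indicator_const (w i) (hEms i), smul_eq_mul, measureReal_def]
  -- first inequality
  have first : (1 / (4 * k)) * ∑ i, w i * q i ≤
      ∫ ω, ∑ i ∈ Finset.univ.filter (fun i => B i ω = true ∧
        ∑ j ∈ (Finset.univ.filter fun j => B j ω = true).erase i, a j i ≤ 1), w i ∂P := by
    rw [hint]
    calc (1 / (4 * k)) * ∑ i, w i * q i = ∑ i, q i / (4*k) * w i := by
          rw [Finset.mul_sum]; exact Finset.sum_congr rfl fun i _ => by ring
      _ ≤ ∑ i, (P (E i)).toReal * w i :=
          Finset.sum_le_sum fun i _ => mul_le_mul_of_nonneg_right (hElb i) (hw i)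
  have hQq : (1 / (4 * k)) * ∑ i, w i * Q i ≤ (1 / (4 * k)) * ∑ i, w i * q i := by
    refine mul_le_mul_of_nonneg_left ?_ (by positivity)
    exact Finset.sum_le_sum fun i _ => mul_le_mul_of_nonneg_left (hQ i).2 (hw i)
  have second := hQq.trans first
  refine ⟨first, second, ?_⟩
  -- existence of a deterministic set
  set g : Finset ι → ℝ := fun X =>
    ∑ i ∈ X.filter (fun i => ∑ j ∈ X.erase i, a j i ≤ 1), w i with hg
  obtain ⟨X₀, -, hX₀⟩ := Finset.exists_max_image (Finset.univ : Finset (Finset ι)) g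
    ⟨∅, Finset.mem_univ _⟩
  have hf_le : ∀ ω, (∑ i ∈ Finset.univ.filter (fun i => B i ω = true ∧
        ∑ j ∈ (Finset.univ.filter fun j => B j ω = true).erase i, a j i ≤ 1), w i) ≤ g X₀ := by
    intro ω
    have : (Finset.univ.filter (fun i => B i ω = true ∧
        ∑ j ∈ (Finset.univ.filter fun j => B j ω = true).erase i, a j i ≤ 1))
        = (Finset.univ.filter fun j => B j ω = true).filter
          (fun i => ∑ j ∈ (Finset.univ.filter fun j => B j ω = true).erase i, a j i ≤ 1) := by
      ext i; simp [and_assoc]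
    rw [this]
    exact hX₀ _ (Finset.mem_univ _)
  have hint_le : (∫ ω, ∑ i ∈ Finset.univ.filter (fun i => B i ω = true ∧
        ∑ j ∈ (Finset.univ.filter fun j => B j ω = true).erase i, a j i ≤ 1), w i ∂P)
      ≤ g X₀ := by
    have hintg : Integrable (fun ω => ∑ i ∈ Finset.univ.filter (fun i => B i ω = true ∧
        ∑ j ∈ (Finset.univ.filter fun j => B j ω = true).erase i, a j i ≤ 1), w i) P := by
      refine (integrable_congr (Filter.Eventually.of_forall hfeq)).mpr ?_
      exact integrable_finset_sum _ fun i _ => (integrable_const (w i)).indicator (hEms i)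
    calc (∫ ω, ∑ i ∈ Finset.univ.filter (fun i => B i ω = true ∧
        ∑ j ∈ (Finset.univ.filter fun j => B j ω = true).erase i, a j i ≤ 1), w i ∂P)
        ≤ ∫ _, g X₀ ∂P := integral_mono hintg (integrable_const _) hf_le
      _ = g X₀ := by simp
  refine ⟨X₀.filter (fun i => ∑ j ∈ X₀.erase i, a j i ≤ 1), ?_, ?_⟩
  · intro i hi
    rw [Finset.mem_filter] at hi
    calc ∑ j ∈ (X₀.filter (fun i => ∑ j ∈ X₀.erase i, a j i ≤ 1)).erase i, a j i
        ≤ ∑ j ∈ X₀.erase i, a j i := by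
          refine Finset.sum_le_sum_of_subset_of_nonneg ?_ (fun j _ _ => ha j i)
          rw [← Finset.filter_erase]
          exact Finset.filter_subset _ _
      _ ≤ 1 := hi.2
  · exact second.trans hint_le
end
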